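/- If ρ is a special right congruence on A^k (|A| > 1), then Λ_ρ = {lcs(C) : C ∈ A^k/ρ} is a semaphore code. -/

import Mathlib

/-- Words of length `k` over `A`. -/
abbrev Word (A : Type*) (k : ℕ) := {w : List A // w.length = k}

/-- The shift action of a letter: `u.a` is the suffix of length `k` of `u a`. -/
def act {A : Type*} (k : ℕ) (a : A) (u : Word A k) : Word A k :=
  ⟨(u.val ++ [a]).drop ((u.val ++ [a]).length - k), by
    have h := u.2
    simp only [List.length_drop, List.length_append, List.length_cons,
      List.length_nil, h]
    omega⟩

/-- A right congruence on `A^k`. -/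
def IsRC {A : Type*} (k : ℕ) (r : Word A k → Word A k → Prop) : Prop :=
  Equivalence r ∧ ∀ u v : Word A k, r u v → ∀ a : A, r (act k a u) (act k a v)

/-- The relation `τ_I` on `A^k`: a common suffix in `I`. -/
def tauW {A : Type*} (k : ℕ) (I : Set (List A)) (u v : Word A k) : Prop :=
  ∃ w ∈ I, w <:+ u.val ∧ w <:+ v.val

/-- `w` is the longest common suffix of the `ρ`-class of `u`. -/
def IsLcsClass {A : Type*} {k : ℕ} (ρ : Word A k → Word A k → Prop)
    (u : Word A k) (w : List A) : Prop :=
  (∀ v : Word A k, ρ u v → w <:+ v.val) ∧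
    ∀ w' : List A, (∀ v : Word A k, ρ u v → w' <:+ v.val) → w' <:+ w

/-- `Λ_ρ = { lcs(C) : C ∈ A^k/ρ }`. -/
def Lam {A : Type*} {k : ℕ} (ρ : Word A k → Word A k → Prop) : Set (List A) :=
  {w | ∃ u : Word A k, IsLcsClass ρ u w}

/-- A suffix code: an antichain with respect to the suffix order. -/
def SuffixCode {A : Type*} (S : Set (List A)) : Prop :=
  ∀ u ∈ S, ∀ v ∈ S, u <:+ v → u = v

/-- Two suffixes of a common list are comparable. -/
lemma suffix_of_suffix_of_length_le {A : Type*} {l w₁ w₂ : List A}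
    (h1 : w₁ <:+ l) (h2 : w₂ <:+ l) (h : w₁.length ≤ w₂.length) : w₁ <:+ w₂ := by
  obtain ⟨t₁, e₁⟩ := h1
  obtain ⟨t₂, rfl⟩ := h2
  have hlen : t₂.length ≤ t₁.length := by
    have := congrArg List.length e₁
    simp only [List.length_append] at this
    omega
  have e2 : w₁ = (t₂ ++ w₂).drop t₁.length := by
    rw [← e₁]
    exact (List.drop_left (l₁ := t₁) (l₂ := w₁)).symm
  have e3 : (t₂ ++ w₂).drop t₁.length = w₂.drop (t₁.length - t₂.length) := by
    have : t₁.length = t₂.length + (t₁.length - t₂.length) := by omega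
    rw [this, List.drop_length_add_append]
    congr 1
    omega
  rw [e2, e3]
  exact List.drop_suffix _ _

/-- Existence of the shortest suffix of `l` lying in `I`, given `l ∈ I`. -/
lemma exists_min_suffix {A : Type*} {I : Set (List A)} {l : List A} (hl : l ∈ I) :
    ∃ s, s <:+ l ∧ s ∈ I ∧ ∀ w ∈ I, w <:+ l → s <:+ w := by
  classical
  set P : ℕ → Prop := fun n => l.drop n ∈ I with hP
  have h0 : P 0 := by simpa [hP] using hl
  refine ⟨l.drop (Nat.findGreatest P l.length), List.drop_suffix _ _,
    Nat.findGreatest_spec (Nat.zero_le _) h0, ?_⟩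
  intro w hw hwl
  obtain ⟨t, rfl⟩ := hwl
  have hPt : P t.length := by
    simpa [hP, List.drop_left] using hw
  have hle : t.length ≤ Nat.findGreatest P (t ++ w).length := by
    apply Nat.le_findGreatest _ hPt
    simp
  have e : (t ++ w).drop (Nat.findGreatest P (t ++ w).length)
      = w.drop (Nat.findGreatest P (t ++ w).length - t.length) := by
    have h1 : Nat.findGreatest P (t ++ w).length
        = t.length + (Nat.findGreatest P (t ++ w).length - t.length) := by omega
    rw [h1, List.drop_length_add_append]
    congr 1
    omega
  rw [e]
  exact List.drop_suffix _ _

/-- if `ρ` is a special right congruence on `A^k` (`|A| > 1`), then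
`Λ_ρ` is a semaphore code (a suffix code `S` with `S A ⊆ A* S`). -/
theorem Lam_semaphore_of_special {A : Type*} [Fintype A] (hA : 1 < Fintype.card A)
    (k : ℕ) (hk : 1 ≤ k) (ρ : Word A k → Word A k → Prop) (hρ : IsRC k ρ)
    (hspecial : ∃ I : Set (List A), (∀ u v w : List A, w ∈ I → u ++ w ++ v ∈ I) ∧
      (∀ w : List A, w.length = k → w ∈ I) ∧
      (∀ u v : Word A k, ρ u v ↔ tauW k I u v)) :
    SuffixCode (Lam ρ) ∧
      ∀ s ∈ Lam ρ, ∀ a : A, ∃ t ∈ Lam ρ, t <:+ s ++ [a] := by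
  obtain ⟨I, hideal, hlen, htau⟩ := hspecial
  -- minimal suffixes
  have hmem : ∀ u : Word A k, u.val ∈ I := fun u => hlen u.val u.2
  -- distinct letters
  obtain ⟨a₀, b₀, hab⟩ := Fintype.exists_pair_of_one_lt_card hA
  -- key: if s is the minimal suffix of u in I, then IsLcsClass ρ u s
  have key : ∀ (u : Word A k) (s : List A), s <:+ u.val → s ∈ I →
      (∀ w ∈ I, w <:+ u.val → s <:+ w) → IsLcsClass ρ u s := by
    intro u s hsu hsI hmin
    have hslen : s.length ≤ k := u.2 ▸ hsu.length_le
    -- ρ u v ↔ s <:+ v.val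
    have hchar : ∀ v : Word A k, ρ u v ↔ s <:+ v.val := by
      intro v
      rw [htau]
      constructor
      · rintro ⟨w, hwI, hwu, hwv⟩
        exact (hmin w hwI hwu).trans hwv
      · intro hv
        exact ⟨s, hsI, hsu, hv⟩
    constructor
    · intro v hv
      exact (hchar v).1 hv
    · intro w' hw'
      have hw'u : w' <:+ u.val := hw' u (hρ.1.refl u)
      have hw'len : w'.length ≤ k := u.2 ▸ hw'u.length_le
      by_cases hle : w'.length ≤ s.length
      · exact suffix_of_suffix_of_length_le hw'u hsu hle
      · -- w' longer than s : derive a contradiction using two letters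
        exfalso
        push_neg at hle
        have hsk : s.length < k := lt_of_lt_of_le hle hw'len
        -- build v_x = replicate (k - s.length - 1) x ++ x :: s
        have hv : ∀ x : A, ∃ v : Word A k, v.val = List.replicate (k - s.length - 1) x ++ x :: s := by
          intro x
          refine ⟨⟨List.replicate (k - s.length - 1) x ++ x :: s, ?_⟩, rfl⟩
          simp only [List.length_append, List.length_replicate, List.length_cons]
          omega
        have hxs : ∀ x : A, ∀ v : Word A k,
            v.val = List.replicate (k - s.length - 1) x ++ x :: s → x :: s <:+ w' := by
          intro x v hvval
          have h1 : x :: s <:+ v.val := by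
            rw [hvval]; exact ⟨_, rfl⟩
          have h2 : ρ u v := by
            rw [hchar, hvval]
            exact (List.suffix_cons x s).trans ⟨_, rfl⟩
          have h3 : w' <:+ v.val := hw' v h2
          exact suffix_of_suffix_of_length_le h1 h3 (by simp; omega)
        obtain ⟨va, hva⟩ := hv a₀
        obtain ⟨vb, hvb⟩ := hv b₀
        have h1 := hxs a₀ va hva
        have h2 := hxs b₀ vb hvb
        have := (suffix_of_suffix_of_length_le h1 h2 (by simp)).eq_of_length (by simp)
        simp only [List.cons.injEq] at this
        exact hab this.1
  -- every element of Lam ρ is the minimal suffix of its basepoint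
  have hLam : ∀ s ∈ Lam ρ, ∃ u : Word A k, s <:+ u.val ∧ s ∈ I ∧
      ∀ w ∈ I, w <:+ u.val → s <:+ w := by
    rintro s ⟨u, hu⟩
    obtain ⟨m, hmu, hmI, hmmin⟩ := exists_min_suffix (hmem u)
    have hm := key u m hmu hmI hmmin
    -- s and m are both lcs of the class of u, hence equal
    have h1 : s <:+ m := hm.2 s hu.1
    have h2 : m <:+ s := hu.2 m hm.1
    have : s = m := h1.eq_of_length (le_antisymm h1.length_le h2.length_le)
    subst this
    exact ⟨u, hmu, hmI, hmmin⟩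
  constructor
  · -- suffix code
    intro s hs t ht hst
    obtain ⟨u, hsu, hsI, hsmin⟩ := hLam s hs
    obtain ⟨v, htv, htI, htmin⟩ := hLam t ht
    have : t <:+ s := htmin s hsI (hst.trans htv)
    exact hst.eq_of_length (le_antisymm hst.length_le this.length_le)
  · -- semaphore property
    intro s hs a
    obtain ⟨u, hsu, hsI, hsmin⟩ := hLam s hs
    set u' := act k a u with hu'
    obtain ⟨t, htu', htI, htmin⟩ := exists_min_suffix (hmem u')
    refine ⟨t, ⟨u', key u' t htu' htI htmin⟩, ?_⟩
    have hu'suf : u'.val <:+ u.val ++ [a] := List.drop_suffix _ _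
    have htfull : t <:+ u.val ++ [a] := htu'.trans hu'suf
    have hsafull : s ++ [a] <:+ u.val ++ [a] := by
      obtain ⟨t, ht⟩ := hsu
      exact ⟨t, by rw [← List.append_assoc, ht]⟩
    by_cases hle : t.length ≤ (s ++ [a]).length
    · exact suffix_of_suffix_of_length_le htfull hsafull hle
    · push_neg at hle
      have hsa : s ++ [a] <:+ t := suffix_of_suffix_of_length_le hsafull htfull (by omega)
      have hsaI : s ++ [a] ∈ I := by
        have := hideal [] [a] s hsI
        simpa using this
      exact htmin (s ++ [a]) hsaI (hsa.trans htu')
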